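/- arXiv:1811.04168 — 4 statements merged into one kernel-verified Lean document; each statement's English description precedes it below -/
import Mathlib

section
/- Let Ω be a finite set with fixed-point-free involutions s₁, s₂, and let G act on Ω commuting with s₁ and s₂ (i.e., G acts by automorphisms of the coloured flag graph). Suppose an orbit O of ⟨s₁,s₂⟩ on Ω meets exactly two G-orbit classes A and B, with Φ·s₁ ∈ A for all Φ ∈ O∩A, Φ·s₁ ∈ B for all Φ ∈ O∩B, and s₂ exchanging A∩O and B∩O. Then |O| is divisible by 4, i.e., |O| = 4n for some n ≥ 1. -/
open Finset in
lemma even_card_of_fpf_invol {α : Type*} [DecidableEq α] (f : α → α) (s : Finset α)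
    (hmap : ∀ x ∈ s, f x ∈ s) (hinv : ∀ x ∈ s, f (f x) = x) (hfpf : ∀ x ∈ s, f x ≠ x) :
    Even s.card := by
  induction s using Finset.strongInduction with
  | _ s ih =>
    rcases s.eq_empty_or_nonempty with rfl | ⟨x, hx⟩
    · simp
    · have hfx : f x ∈ s := hmap x hx
      have hne : f x ≠ x := hfpf x hx
      set t := s \ {x, f x} with ht
      have hts : t ⊂ s := by
        refine Finset.ssubset_iff_of_subset (Finset.sdiff_subset) |>.mpr ⟨x, hx, ?_⟩
        simp [ht]
      have hcard : s.card = t.card + 2 := by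
        have : ({x, f x} : Finset α) ⊆ s := by
          intro y hy; simp at hy; rcases hy with rfl | rfl <;> assumption
        have h2 : 2 ≤ s.card := by
          calc 2 = ({x, f x} : Finset α).card := (Finset.card_pair hne.symm).symm
            _ ≤ s.card := Finset.card_le_card this
        rw [ht, Finset.card_sdiff_of_subset this, Finset.card_pair hne.symm]
        omega
      have het : Even t.card := by
        refine ih t hts ?_ ?_ ?_
        · intro y hy
          rw [ht, Finset.mem_sdiff] at hy ⊢
          obtain ⟨hys, hyn⟩ := hy
          simp only [Finset.mem_insert, Finset.mem_singleton] at hyn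
          push_neg at hyn
          refine ⟨hmap y hys, ?_⟩
          simp only [Finset.mem_insert, Finset.mem_singleton]
          push_neg
          constructor
          · intro h; apply hyn.2; rw [← h, hinv y hys]
          · intro h
            have := hinv x hx ▸ h
            have hyx : y = x := by
              have := congrArg f h
              rwa [hinv y hys, hinv x hx] at this
            exact hyn.1 hyx
        · intro y hy; exact hinv y (Finset.mem_sdiff.mp hy).1
        · intro y hy; exact hfpf y (Finset.mem_sdiff.mp hy).1
      rw [hcard]
      exact het.add (even_two)

theorem stmt_3 (Ω : Type*) [Fintype Ω] (s₁ s₂ : Equiv.Perm Ω)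
    (h1inv : ∀ x, s₁ (s₁ x) = x) (h2inv : ∀ x, s₂ (s₂ x) = x)
    (h1f : ∀ x, s₁ x ≠ x) (h2f : ∀ x, s₂ x ≠ x)
    (G : Type*) [Group G] [MulAction G Ω]
    (hc1 : ∀ (g : G) (x : Ω), s₁ (g • x) = g • s₁ x)
    (hc2 : ∀ (g : G) (x : Ω), s₂ (g • x) = g • s₂ x)
    (Φ₀ : Ω) (O : Set Ω)
    (hO : O = (MulAction.orbit (Subgroup.closure ({s₁, s₂} : Set (Equiv.Perm Ω))) Φ₀ : Set Ω))
    (A B : Set Ω)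
    (hA : ∃ a, A = MulAction.orbit G a) (hB : ∃ b, B = MulAction.orbit G b)
    (hAB : A ≠ B)
    (hcover : O ⊆ A ∪ B) (hOA : (O ∩ A).Nonempty) (hOB : (O ∩ B).Nonempty)
    (h1A : ∀ Φ ∈ O ∩ A, s₁ Φ ∈ A) (h1B : ∀ Φ ∈ O ∩ B, s₁ Φ ∈ B)
    (h2A : ∀ Φ ∈ O ∩ A, s₂ Φ ∈ B) (h2B : ∀ Φ ∈ O ∩ B, s₂ Φ ∈ A) :
    ∃ n : ℕ, 1 ≤ n ∧ Nat.card O = 4 * n := by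
  classical
  -- A and B are disjoint
  have hdisj : Disjoint A B := by
    obtain ⟨a, rfl⟩ := hA
    obtain ⟨b, rfl⟩ := hB
    exact (MulAction.orbit.eq_or_disjoint a b).resolve_left hAB
  -- O is invariant under s₁ and s₂
  have hOinv : ∀ (s : Equiv.Perm Ω), s ∈ ({s₁, s₂} : Set (Equiv.Perm Ω)) →
      ∀ x ∈ O, s x ∈ O := by
    intro s hs x hx
    rw [hO] at hx ⊢
    obtain ⟨h, rfl⟩ := hx
    exact ⟨(⟨s, Subgroup.subset_closure hs⟩ : Subgroup.closure _) * h, rfl⟩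
  have hO1 : ∀ x ∈ O, s₁ x ∈ O := hOinv s₁ (Or.inl rfl)
  have hO2 : ∀ x ∈ O, s₂ x ∈ O := hOinv s₂ (Or.inr rfl)
  -- finsets
  set sA := (O ∩ A).toFinset with hsA
  set sB := (O ∩ B).toFinset with hsB
  -- s₂ gives a bijection sA → sB
  have hABcard : sA.card = sB.card := by
    apply le_antisymm
    · apply Finset.card_le_card_of_injOn s₂
      · intro x hx
        rw [hsA, Finset.mem_coe, Set.mem_toFinset] at hx
        rw [hsB, Finset.mem_coe, Set.mem_toFinset]
        exact ⟨hO2 x hx.1, h2A x hx⟩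
      · intro x _ y _ h; exact s₂.injective h
    · apply Finset.card_le_card_of_injOn s₂
      · intro x hx
        rw [hsB, Finset.mem_coe, Set.mem_toFinset] at hx
        rw [hsA, Finset.mem_coe, Set.mem_toFinset]
        exact ⟨hO2 x hx.1, h2B x hx⟩
      · intro x _ y _ h; exact s₂.injective h
  -- sA has even cardinality via s₁
  have hevenA : Even sA.card := by
    apply even_card_of_fpf_invol s₁
    · intro x hx
      rw [hsA, Set.mem_toFinset] at hx ⊢
      exact ⟨hO1 x hx.1, h1A x hx⟩
    · intro x _; exact h1inv x
    · intro x _; exact h1f x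
  -- |O| = |sA| + |sB|
  have hsplit : Nat.card O = sA.card + sB.card := by
    rw [Nat.card_coe_set_eq, Set.ncard_eq_toFinset_card']
    have hunion : O.toFinset = sA ∪ sB := by
      ext x
      rw [Finset.mem_union, hsA, hsB, Set.mem_toFinset, Set.mem_toFinset, Set.mem_toFinset]
      constructor
      · intro hx
        rcases hcover hx with h | h
        · exact Or.inl ⟨hx, h⟩
        · exact Or.inr ⟨hx, h⟩
      · rintro (⟨h, _⟩ | ⟨h, _⟩) <;> exact h
    rw [hunion, Finset.card_union_of_disjoint]
    rw [Finset.disjoint_left]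
    intro x hx hx'
    rw [hsA, Set.mem_toFinset] at hx
    rw [hsB, Set.mem_toFinset] at hx'
    exact Set.disjoint_left.mp hdisj hx.2 hx'.2
  obtain ⟨k, hk⟩ := hevenA
  have hApos : 0 < sA.card := by
    rw [hsA]
    exact Finset.card_pos.mpr (Set.toFinset_nonempty.mpr hOA)
  refine ⟨k, ?_, ?_⟩
  · omega
  · rw [hsplit, ← hABcard]; omega
end

section
/- Let Ω be a finite set with fixed-point-free involutions s₀, s₁, and let G be a group acting on Ω commuting with s₀ and s₁. Suppose an orbit O of ⟨s₀,s₁⟩ on Ω meets exactly three G-orbit classes A, B, C, such that: s₀ fixes A∩O setwise and exchanges B∩O and C∩O, while s₁ fixes C∩O setwise and exchanges A∩O and B∩O. Then |O| is divisible by 6, i.e., |O| = 6n for some n ≥ 1. -/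
open MulAction

/-- A finite type with a fixed-point-free involution has even cardinality. -/
lemma even_card_of_fpf {α : Type*} [Finite α] (f : Equiv.Perm α)
    (hinv : ∀ x, f (f x) = x) (hf : ∀ x, f x ≠ x) : Even (Nat.card α) := by
  have hf2 : f ^ 2 = 1 := by
    ext x; simp [pow_succ, hinv x]
  set H := Subgroup.zpowers f with hH
  have hp : IsPGroup 2 H := by
    intro g
    refine ⟨1, ?_⟩
    obtain ⟨n, hn⟩ := g.2
    have hf2z : f ^ (2 : ℤ) = 1 := by
      rw [show (2:ℤ) = ((2:ℕ):ℤ) by norm_num, zpow_natCast, hf2]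
    have h1 : (g : Equiv.Perm α) ^ (2 ^ 1 : ℕ) = 1 := by
      rw [← hn]
      show (f ^ n) ^ (2 : ℕ) = 1
      rw [sq, ← zpow_add, ← two_mul, zpow_mul, hf2z, one_zpow]
    exact Subtype.ext (by simpa using h1)
  have hfix : Nat.card (MulAction.fixedPoints H α) = 0 := by
    have : IsEmpty (MulAction.fixedPoints H α) := by
      constructor
      rintro ⟨x, hx⟩
      exact hf x (hx ⟨f, Subgroup.mem_zpowers f⟩)
    exact Nat.card_of_isEmpty
  have hmod := hp.card_modEq_card_fixedPoints α
  rw [hfix] at hmod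
  exact even_iff_two_dvd.mpr ((Nat.modEq_zero_iff_dvd).1 hmod)

theorem stmt_4 (Ω : Type*) [Fintype Ω] (s₀ s₁ : Equiv.Perm Ω)
    (h0inv : ∀ x, s₀ (s₀ x) = x) (h1inv : ∀ x, s₁ (s₁ x) = x)
    (h0f : ∀ x, s₀ x ≠ x) (h1f : ∀ x, s₁ x ≠ x)
    (G : Type*) [Group G] [MulAction G Ω]
    (hc0 : ∀ (g : G) (x : Ω), s₀ (g • x) = g • s₀ x)
    (hc1 : ∀ (g : G) (x : Ω), s₁ (g • x) = g • s₁ x)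
    (Φ₀ : Ω) (O : Set Ω)
    (hO : O = (MulAction.orbit (Subgroup.closure ({s₀, s₁} : Set (Equiv.Perm Ω))) Φ₀ : Set Ω))
    (A B C : Set Ω)
    (hA : ∃ a, A = MulAction.orbit G a) (hB : ∃ b, B = MulAction.orbit G b)
    (hC : ∃ c, C = MulAction.orbit G c)
    (hAB : A ≠ B) (hAC : A ≠ C) (hBC : B ≠ C)
    (hcover : O ⊆ A ∪ B ∪ C)
    (hOA : (O ∩ A).Nonempty) (hOB : (O ∩ B).Nonempty) (hOC : (O ∩ C).Nonempty)
    -- s₀ fixes A∩O setwise and exchanges B∩O and C∩O: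
    (h0A : ∀ Φ ∈ O ∩ A, s₀ Φ ∈ A) (h0B : ∀ Φ ∈ O ∩ B, s₀ Φ ∈ C) (h0C : ∀ Φ ∈ O ∩ C, s₀ Φ ∈ B)
    -- s₁ fixes C∩O setwise and exchanges A∩O and B∩O:
    (h1C : ∀ Φ ∈ O ∩ C, s₁ Φ ∈ C) (h1A : ∀ Φ ∈ O ∩ A, s₁ Φ ∈ B) (h1B : ∀ Φ ∈ O ∩ B, s₁ Φ ∈ A) :
    ∃ n : ℕ, 1 ≤ n ∧ Nat.card O = 6 * n := by
  classical
  -- O is closed under s₀ and s₁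
  set H := Subgroup.closure ({s₀, s₁} : Set (Equiv.Perm Ω)) with hHdef
  have hs₀H : s₀ ∈ H := Subgroup.subset_closure (by simp)
  have hs₁H : s₁ ∈ H := Subgroup.subset_closure (by simp)
  have hOs : ∀ (s : Equiv.Perm Ω), s ∈ H → ∀ x ∈ O, s x ∈ O := by
    intro s hs x hx
    rw [hO] at hx ⊢
    obtain ⟨h, hh⟩ := hx
    have hh' : h • Φ₀ = x := hh
    exact ⟨(⟨s, hs⟩ : H) * h, by show ((⟨s, hs⟩ : H) * h) • Φ₀ = s x; rw [mul_smul, hh']; rfl⟩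
  have hOs₀ : ∀ x ∈ O, s₀ x ∈ O := hOs s₀ hs₀H
  have hOs₁ : ∀ x ∈ O, s₁ x ∈ O := hOs s₁ hs₁H
  -- pairwise disjointness of A, B, C
  have hdisj : ∀ (X Y : Set Ω), (∃ a, X = MulAction.orbit G a) → (∃ b, Y = MulAction.orbit G b) →
      X ≠ Y → ∀ x, x ∈ X → x ∈ Y → False := by
    rintro X Y ⟨a, rfl⟩ ⟨b, rfl⟩ hne x hxX hxY
    exact hne ((MulAction.orbit_eq_iff.2 hxX).symm.trans (MulAction.orbit_eq_iff.2 hxY))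
  have hdAB := hdisj A B hA hB hAB
  have hdAC := hdisj A C hA hC hAC
  have hdBC := hdisj B C hB hC hBC
  -- image facts
  have himg1 : s₁ '' (O ∩ A) = O ∩ B := by
    ext x
    constructor
    · rintro ⟨y, hy, rfl⟩
      exact ⟨hOs₁ y hy.1, h1A y hy⟩
    · intro hx
      refine ⟨s₁ x, ⟨hOs₁ x hx.1, h1B x hx⟩, h1inv x⟩
  have himg0 : s₀ '' (O ∩ B) = O ∩ C := by
    ext x
    constructor
    · rintro ⟨y, hy, rfl⟩
      exact ⟨hOs₀ y hy.1, h0B y hy⟩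
    · intro hx
      refine ⟨s₀ x, ⟨hOs₀ x hx.1, h0C x hx⟩, h0inv x⟩
  have hcardAB : (O ∩ A).ncard = (O ∩ B).ncard := by
    rw [← himg1]; exact (Set.ncard_image_of_injective _ s₁.injective).symm
  have hcardBC : (O ∩ B).ncard = (O ∩ C).ncard := by
    rw [← himg0]; exact (Set.ncard_image_of_injective _ s₀.injective).symm
  -- evenness of (O ∩ A).ncard via the fixed-point-free involution s₀
  have hmemA : ∀ x : (O ∩ A : Set Ω), s₀ x.1 ∈ (O ∩ A : Set Ω) :=
    fun x => ⟨hOs₀ x.1 x.2.1, h0A x.1 x.2⟩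
  let f : Equiv.Perm (O ∩ A : Set Ω) :=
    { toFun := fun x => ⟨s₀ x.1, hmemA x⟩
      invFun := fun x => ⟨s₀ x.1, hmemA x⟩
      left_inv := fun x => Subtype.ext (h0inv x.1)
      right_inv := fun x => Subtype.ext (h0inv x.1) }
  have heven : Even (Nat.card (O ∩ A : Set Ω)) := by
    apply even_card_of_fpf f
    · intro x; exact Subtype.ext (h0inv x.1)
    · intro x hx; exact h0f x.1 (congrArg Subtype.val hx)
  rw [Nat.card_coe_set_eq] at heven
  obtain ⟨k, hk⟩ := heven
  -- cardinality decomposition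
  have hunion : O = (O ∩ A) ∪ (O ∩ B) ∪ (O ∩ C) := by
    ext x
    constructor
    · intro hx
      rcases hcover hx with (h | h) | h
      · exact Or.inl (Or.inl ⟨hx, h⟩)
      · exact Or.inl (Or.inr ⟨hx, h⟩)
      · exact Or.inr ⟨hx, h⟩
    · rintro ((⟨h, _⟩ | ⟨h, _⟩) | ⟨h, _⟩) <;> exact h
  have dAB : Disjoint (O ∩ A) (O ∩ B) :=
    Set.disjoint_left.2 fun x hx hx' => hdAB x hx.2 hx'.2
  have dC : Disjoint ((O ∩ A) ∪ (O ∩ B)) (O ∩ C) := by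
    refine Set.disjoint_left.2 fun x hx hx' => ?_
    rcases hx with hx | hx
    · exact hdAC _ hx.2 hx'.2
    · exact hdBC _ hx.2 hx'.2
  have hcard : O.ncard = (O ∩ A).ncard + (O ∩ B).ncard + (O ∩ C).ncard := by
    conv_lhs => rw [hunion]
    rw [Set.ncard_union_eq dC (Set.toFinite _) (Set.toFinite _),
      Set.ncard_union_eq dAB (Set.toFinite _) (Set.toFinite _)]
  have hpos : 0 < (O ∩ A).ncard := (Set.ncard_pos (Set.toFinite _)).2 hOA
  refine ⟨k, by omega, ?_⟩
  rw [Nat.card_coe_set_eq]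
  omega
end

section
/- Let Ω be a finite set with fixed-point-free involutions s₁, s₂, and let G act on Ω commuting with s₁ and s₂. Suppose an orbit O of ⟨s₁,s₂⟩ meets exactly three G-orbit classes A, B, C, with s₁ exchanging A∩O with B∩O and fixing C∩O setwise, and s₂ exchanging B∩O with C∩O and fixing A∩O setwise. Then |O| is divisible by 6. -/
/-- A finite type with a fixed-point-free involution has even cardinality. -/
lemma even_card_of_fpf_involution {α : Type*} [Fintype α] (f : α → α)
    (hinv : ∀ x, f (f x) = x) (hf : ∀ x, f x ≠ x) : Even (Fintype.card α) := by
  classical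
  set f' : Function.End α := f with hf'
  have hfE : f' ^ (2 ^ 1) = 1 := by
    funext x
    show f' (f' ((1 : Function.End α) x)) = x
    exact hinv _
  have hmod := Equiv.Perm.card_fixedPoints_modEq (p := 2) (n := 1) hfE
  have hempty : (Function.fixedPoints f') = ∅ := by
    ext x
    simp [Function.IsFixedPt, Function.fixedPoints, hf x, hf']
    exact hf x
  have h0 : Fintype.card (Function.fixedPoints f') = 0 := by
    simp [hempty]
  rw [Nat.even_iff]
  simpa [Nat.ModEq, h0] using hmod

theorem stmt_6 (Ω : Type*) [Fintype Ω] (s₁ s₂ : Equiv.Perm Ω)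
    (h1inv : ∀ x, s₁ (s₁ x) = x) (h2inv : ∀ x, s₂ (s₂ x) = x)
    (h1f : ∀ x, s₁ x ≠ x) (h2f : ∀ x, s₂ x ≠ x)
    (G : Type*) [Group G] [MulAction G Ω]
    (hc1 : ∀ (g : G) (x : Ω), s₁ (g • x) = g • s₁ x)
    (hc2 : ∀ (g : G) (x : Ω), s₂ (g • x) = g • s₂ x)
    (Φ₀ : Ω) (O : Set Ω)
    (hO : O = (MulAction.orbit (Subgroup.closure ({s₁, s₂} : Set (Equiv.Perm Ω))) Φ₀ : Set Ω))
    (A B C : Set Ω)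
    (hA : ∃ a, A = MulAction.orbit G a) (hB : ∃ b, B = MulAction.orbit G b)
    (hC : ∃ c, C = MulAction.orbit G c)
    (hAB : A ≠ B) (hAC : A ≠ C) (hBC : B ≠ C)
    (hcover : O ⊆ A ∪ B ∪ C)
    (hOA : (O ∩ A).Nonempty) (hOB : (O ∩ B).Nonempty) (hOC : (O ∩ C).Nonempty)
    -- s₁ exchanges A∩O with B∩O and fixes C∩O setwise:
    (h1A : ∀ Φ ∈ O ∩ A, s₁ Φ ∈ B) (h1B : ∀ Φ ∈ O ∩ B, s₁ Φ ∈ A) (h1C : ∀ Φ ∈ O ∩ C, s₁ Φ ∈ C)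
    -- s₂ exchanges B∩O with C∩O and fixes A∩O setwise:
    (h2B : ∀ Φ ∈ O ∩ B, s₂ Φ ∈ C) (h2C : ∀ Φ ∈ O ∩ C, s₂ Φ ∈ B) (h2A : ∀ Φ ∈ O ∩ A, s₂ Φ ∈ A) :
    6 ∣ Nat.card O := by
  classical
  -- s₁, s₂ preserve O
  have hs1m : s₁ ∈ Subgroup.closure ({s₁, s₂} : Set (Equiv.Perm Ω)) :=
    Subgroup.subset_closure (by simp)
  have hs2m : s₂ ∈ Subgroup.closure ({s₁, s₂} : Set (Equiv.Perm Ω)) :=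
    Subgroup.subset_closure (by simp)
  have hs1O : ∀ Φ ∈ O, s₁ Φ ∈ O := by
    intro Φ hΦ
    rw [hO] at hΦ ⊢
    obtain ⟨g, rfl⟩ := hΦ
    exact ⟨(⟨s₁, hs1m⟩ : Subgroup.closure ({s₁, s₂} : Set (Equiv.Perm Ω))) * g, rfl⟩
  have hs2O : ∀ Φ ∈ O, s₂ Φ ∈ O := by
    intro Φ hΦ
    rw [hO] at hΦ ⊢
    obtain ⟨g, rfl⟩ := hΦ
    exact ⟨(⟨s₂, hs2m⟩ : Subgroup.closure ({s₁, s₂} : Set (Equiv.Perm Ω))) * g, rfl⟩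
  -- distinct G-orbits are disjoint
  have horb : ∀ (X Y : Set Ω), (∃ x, X = MulAction.orbit G x) →
      (∃ y, Y = MulAction.orbit G y) → X ≠ Y → Disjoint X Y := by
    rintro X Y ⟨x, rfl⟩ ⟨y, rfl⟩ hne
    rw [Set.disjoint_left]
    intro z hzx hzy
    exact hne ((MulAction.orbit_eq_iff.mpr hzx).symm.trans (MulAction.orbit_eq_iff.mpr hzy))
  have dAB := horb A B hA hB hAB
  have dAC := horb A C hA hC hAC
  have dBC := horb B C hB hC hBC
  -- images
  have himg1 : s₁ '' (O ∩ A) = O ∩ B := by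
    apply Set.Subset.antisymm
    · rintro _ ⟨x, hx, rfl⟩
      exact ⟨hs1O x hx.1, h1A x hx⟩
    · intro y hy
      refine ⟨s₁ y, ⟨hs1O y hy.1, h1B y hy⟩, h1inv y⟩
  have himg2 : s₂ '' (O ∩ B) = O ∩ C := by
    apply Set.Subset.antisymm
    · rintro _ ⟨x, hx, rfl⟩
      exact ⟨hs2O x hx.1, h2B x hx⟩
    · intro y hy
      refine ⟨s₂ y, ⟨hs2O y hy.1, h2C y hy⟩, h2inv y⟩
  have hcard1 : (O ∩ A).ncard = (O ∩ B).ncard := by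
    rw [← himg1, Set.ncard_image_of_injective _ s₁.injective]
  have hcard2 : (O ∩ B).ncard = (O ∩ C).ncard := by
    rw [← himg2, Set.ncard_image_of_injective _ s₂.injective]
  -- partition of O
  have hOeq : O = (O ∩ A) ∪ ((O ∩ B) ∪ (O ∩ C)) := by
    ext x
    constructor
    · intro hx
      rcases hcover hx with (h | h) | h
      · exact Or.inl ⟨hx, h⟩
      · exact Or.inr (Or.inl ⟨hx, h⟩)
      · exact Or.inr (Or.inr ⟨hx, h⟩)
    · rintro (h | h | h) <;> exact h.1
  have hfinA : (O ∩ A).Finite := Set.toFinite _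
  have hfinB : (O ∩ B).Finite := Set.toFinite _
  have hfinC : (O ∩ C).Finite := Set.toFinite _
  have dBC' : Disjoint (O ∩ B) (O ∩ C) :=
    (dBC.mono (Set.inter_subset_right) (Set.inter_subset_right))
  have dA' : Disjoint (O ∩ A) ((O ∩ B) ∪ (O ∩ C)) := by
    refine Disjoint.union_right ?_ ?_
    · exact dAB.mono Set.inter_subset_right Set.inter_subset_right
    · exact dAC.mono Set.inter_subset_right Set.inter_subset_right
  have hcardO : O.ncard = (O ∩ A).ncard + ((O ∩ B).ncard + (O ∩ C).ncard) := by
    conv_lhs => rw [hOeq]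
    rw [Set.ncard_union_eq dA' hfinA (hfinB.union hfinC),
      Set.ncard_union_eq dBC' hfinB hfinC]
  -- evenness of (O ∩ A).ncard via s₂
  have hinvol : ∀ x : (O ∩ A : Set Ω), s₂ (x : Ω) ∈ (O ∩ A : Set Ω) := fun x =>
    ⟨hs2O x (x.2).1, h2A x x.2⟩
  have heven : Even (O ∩ A).ncard := by
    rw [Set.ncard_eq_toFinset_card', Set.toFinset_card]
    exact even_card_of_fpf_involution (α := (O ∩ A : Set Ω))
      (fun x => ⟨s₂ x, hinvol x⟩)
      (fun x => Subtype.ext (h2inv x)) (fun x hx => h2f x (congrArg Subtype.val hx))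
  obtain ⟨k, hk⟩ := heven
  have hfin : O.ncard = 3 * (O ∩ A).ncard := by
    rw [hcardO, ← hcard1, ← hcard1.trans hcard2]; ring
  rw [Nat.card_coe_set_eq O, hfin, hk]
  omega
end

section
/- Let Ω be a finite set with fixed-point-free involutions s₀, s₁, and let G act on Ω commuting with s₀ and s₁. Suppose an orbit O of ⟨s₀,s₁⟩ meets exactly two G-orbit classes A and B, with s₀ fixing A∩O setwise and fixing B∩O setwise (semi-edges of colour 0 at both classes), and s₁ exchanging A∩O and B∩O. Then |O| is divisible by 4. -/
private lemma aux_even {α : Type*} [DecidableEq α] (f : α → α)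
    (hinv : ∀ x, f (f x) = x) (hne : ∀ x, f x ≠ x) :
    ∀ s : Finset α, (∀ x ∈ s, f x ∈ s) → 2 ∣ s.card := by
  intro s
  induction s using Finset.strongInduction with
  | _ s ih =>
    intro hs
    rcases s.eq_empty_or_nonempty with rfl | ⟨x, hx⟩
    · simp
    · have hfx := hs x hx
      have h2 : ({x, f x} : Finset α) ⊆ s := by
        intro y hy
        simp only [Finset.mem_insert, Finset.mem_singleton] at hy
        rcases hy with rfl | rfl <;> assumption
      have hcard2 : ({x, f x} : Finset α).card = 2 :=
        Finset.card_pair (Ne.symm (hne x))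
      have hssub : s \ {x, f x} ⊂ s :=
        Finset.sdiff_ssubset h2 ⟨x, Finset.mem_insert_self _ _⟩
      have hstab : ∀ y ∈ s \ {x, f x}, f y ∈ s \ {x, f x} := by
        intro y hy
        simp only [Finset.mem_sdiff, Finset.mem_insert, Finset.mem_singleton,
          not_or] at hy ⊢
        refine ⟨hs y hy.1, ?_, ?_⟩
        · intro h
          exact hy.2.2 (by rw [← h, hinv])
        · intro h
          exact hy.2.1 (by have := congrArg f h; rwa [hinv, hinv] at this)
      have hdvd := ih _ hssub hstab
      have hle : 2 ≤ s.card := by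
        calc 2 = ({x, f x} : Finset α).card := hcard2.symm
        _ ≤ s.card := Finset.card_le_card h2
      have hsd : (s \ {x, f x}).card = s.card - 2 := by
        rw [Finset.card_sdiff_of_subset h2, hcard2]
      rw [hsd] at hdvd
      omega

theorem stmt_12 (Ω : Type*) [Fintype Ω] (s₀ s₁ : Equiv.Perm Ω)
    (h0inv : ∀ x, s₀ (s₀ x) = x) (h1inv : ∀ x, s₁ (s₁ x) = x)
    (h0f : ∀ x, s₀ x ≠ x) (h1f : ∀ x, s₁ x ≠ x)
    (G : Type*) [Group G] [MulAction G Ω]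
    (hc0 : ∀ (g : G) (x : Ω), s₀ (g • x) = g • s₀ x)
    (hc1 : ∀ (g : G) (x : Ω), s₁ (g • x) = g • s₁ x)
    (Φ₀ : Ω) (O : Set Ω)
    (hO : O = (MulAction.orbit (Subgroup.closure ({s₀, s₁} : Set (Equiv.Perm Ω))) Φ₀ : Set Ω))
    (A B : Set Ω)
    (hA : ∃ a, A = MulAction.orbit G a) (hB : ∃ b, B = MulAction.orbit G b)
    (hAB : A ≠ B)
    (hcover : O ⊆ A ∪ B) (hOA : (O ∩ A).Nonempty) (hOB : (O ∩ B).Nonempty)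
    -- s₀ fixes A∩O and B∩O setwise (semi-edges of colour 0 at both classes):
    (h0A : ∀ Φ ∈ O ∩ A, s₀ Φ ∈ A) (h0B : ∀ Φ ∈ O ∩ B, s₀ Φ ∈ B)
    -- s₁ exchanges A∩O and B∩O:
    (h1A : ∀ Φ ∈ O ∩ A, s₁ Φ ∈ B) (h1B : ∀ Φ ∈ O ∩ B, s₁ Φ ∈ A) :
    4 ∣ Nat.card O := by
  classical
  -- A and B are disjoint
  obtain ⟨a, rfl⟩ := hA
  obtain ⟨b, rfl⟩ := hB
  have hdisj : Disjoint (MulAction.orbit G a ∩ O) (MulAction.orbit G b ∩ O) := by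
    rw [Set.disjoint_left]
    rintro x ⟨hxa, -⟩ ⟨hxb, -⟩
    obtain ⟨g, rfl⟩ := hxa
    obtain ⟨h, hh⟩ := hxb
    apply hAB
    calc MulAction.orbit G a = MulAction.orbit G (g • a) := (MulAction.orbit_smul g a).symm
      _ = MulAction.orbit G (h • b) := by simp only at hh; rw [← hh]
      _ = MulAction.orbit G b := MulAction.orbit_smul h b
  set H := Subgroup.closure ({s₀, s₁} : Set (Equiv.Perm Ω)) with hH
  have hs0H : s₀ ∈ H := Subgroup.subset_closure (by simp)
  have hs1H : s₁ ∈ H := Subgroup.subset_closure (by simp)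
  -- O is stable under s₀ and s₁
  have hstab : ∀ (t : Equiv.Perm Ω), t ∈ H → ∀ x ∈ O, t x ∈ O := by
    intro t ht x hx
    rw [hO] at hx ⊢
    obtain ⟨g, rfl⟩ := hx
    exact ⟨(⟨t, ht⟩ : H) * g, rfl⟩
  set SA := O ∩ MulAction.orbit G a with hSA
  set SB := O ∩ MulAction.orbit G b with hSB
  have hdisj' : Disjoint SA SB := by
    rw [hSA, hSB, Set.inter_comm O, Set.inter_comm O]
    exact hdisj
  have hunion : O = SA ∪ SB := by
    apply Set.Subset.antisymm
    · intro x hx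
      rcases hcover hx with h | h
      · exact Or.inl ⟨hx, h⟩
      · exact Or.inr ⟨hx, h⟩
    · rintro x (⟨hx, -⟩ | ⟨hx, -⟩) <;> exact hx
  -- s₁ gives a bijection SA ≃ SB
  have e : SA ≃ SB :=
    { toFun := fun x => ⟨s₁ x, hstab s₁ hs1H x x.2.1, h1A x x.2⟩
      invFun := fun x => ⟨s₁ x, hstab s₁ hs1H x x.2.1, h1B x x.2⟩
      left_inv := fun x => Subtype.ext (h1inv x)
      right_inv := fun x => Subtype.ext (h1inv x) }
  have hcardAB : Nat.card SA = Nat.card SB := Nat.card_congr e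
  -- s₀ is a fixed-point-free involution on SA
  have hSAstab : ∀ x ∈ SA.toFinset, s₀ x ∈ SA.toFinset := by
    intro x hx
    rw [Set.mem_toFinset] at hx ⊢
    exact ⟨hstab s₀ hs0H x hx.1, h0A x hx⟩
  have heven : 2 ∣ Nat.card SA := by
    have := aux_even s₀ h0inv h0f SA.toFinset hSAstab
    rwa [Nat.card_coe_set_eq, Set.ncard_eq_toFinset_card']
  -- put it together
  have hcount : Nat.card O = Nat.card SA + Nat.card SB := by
    rw [Nat.card_coe_set_eq, Nat.card_coe_set_eq, Nat.card_coe_set_eq,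
      hunion, Set.ncard_union_eq hdisj' (Set.toFinite _) (Set.toFinite _)]
  obtain ⟨k, hk⟩ := heven
  rw [hcount, ← hcardAB, hk]
  exact ⟨k, by ring⟩
end
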